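/- Under the hypotheses of the binary Darboux transformation theorem (d, d̄ derivations, φ₀ solving d̄φ₀ = (dφ₀)·φ₀, P, Q, U, V, X solving the Darboux system with α = β = 0), assume additionally Q·V = V·φ₀. Then φ := φ₀ + U·X⁻¹·V satisfies the Riemann equation d̄φ = (dφ)·φ, and moreover (X·P·X⁻¹)·V = V·φ. -/

import Mathlib

open MulOpposite

section Defs

variable {A Ω : Type*} [Ring A] [AddCommGroup Ω] [Module A Ω] [Module Aᵐᵒᵖ Ω]
  [SMulCommClass A Aᵐᵒᵖ Ω]

/-- Product of a matrix over `A` with a matrix over the `A`-bimodule `Ω`. -/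
def lmulMat {k l n : ℕ} (M : Matrix (Fin k) (Fin l) A) (W : Matrix (Fin l) (Fin n) Ω) :
    Matrix (Fin k) (Fin n) Ω :=
  fun i j => ∑ s, M i s • W s j

/-- Product of a matrix over the `A`-bimodule `Ω` with a matrix over `A`. -/
def rmulMat {k l n : ℕ} (W : Matrix (Fin k) (Fin l) Ω) (M : Matrix (Fin l) (Fin n) A) :
    Matrix (Fin k) (Fin n) Ω :=
  fun i j => ∑ s, op (M s j) • W i s

/-- Entrywise extension of a map `d : A → Ω` to matrices. -/
def dMat (d : A → Ω) {k l : ℕ} (M : Matrix (Fin k) (Fin l) A) : Matrix (Fin k) (Fin l) Ω :=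
  fun i j => d (M i j)

end Defs

section API
set_option linter.unusedSectionVars false
variable {A Ω : Type*} [Ring A] [AddCommGroup Ω] [Module A Ω] [Module Aᵐᵒᵖ Ω]
  [SMulCommClass A Aᵐᵒᵖ Ω]

lemma lmul_lmul {k l p q : ℕ} (M : Matrix (Fin k) (Fin l) A) (N : Matrix (Fin l) (Fin p) A)
    (W : Matrix (Fin p) (Fin q) Ω) : lmulMat M (lmulMat N W) = lmulMat (M * N) W := by
  funext i j
  simp only [lmulMat, Matrix.mul_apply, Finset.smul_sum, Finset.sum_smul, mul_smul]
  rw [Finset.sum_comm]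

lemma op_sum' {ι : Type*} (s : Finset ι) (f : ι → A) :
    (op (∑ i ∈ s, f i) : Aᵐᵒᵖ) = ∑ i ∈ s, op (f i) :=
  map_sum (opAddEquiv : A ≃+ Aᵐᵒᵖ).toAddMonoidHom f s

lemma rmul_rmul {k l p q : ℕ} (W : Matrix (Fin k) (Fin l) Ω) (M : Matrix (Fin l) (Fin p) A)
    (N : Matrix (Fin p) (Fin q) A) : rmulMat (rmulMat W M) N = rmulMat W (M * N) := by
  funext i j
  simp only [rmulMat, Matrix.mul_apply, Finset.smul_sum, Finset.sum_smul, op_sum', op_mul,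
    mul_smul]
  rw [Finset.sum_comm]

lemma lmul_rmul {k l p q : ℕ} (M : Matrix (Fin k) (Fin l) A) (W : Matrix (Fin l) (Fin p) Ω)
    (N : Matrix (Fin p) (Fin q) A) :
    lmulMat M (rmulMat W N) = rmulMat (lmulMat M W) N := by
  funext i j
  simp only [lmulMat, rmulMat, Finset.smul_sum]
  rw [Finset.sum_comm]
  congr 1; funext s; congr 1; funext t
  rw [smul_comm]

lemma lmulMat_one {k q : ℕ} (W : Matrix (Fin k) (Fin q) Ω) :
    lmulMat (1 : Matrix (Fin k) (Fin k) A) W = W := by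
  funext i j
  simp [lmulMat, Matrix.one_apply, ite_smul]

lemma rmulMat_one {k q : ℕ} (W : Matrix (Fin q) (Fin k) Ω) :
    rmulMat W (1 : Matrix (Fin k) (Fin k) A) = W := by
  funext i j
  simp [rmulMat, Matrix.one_apply, ite_smul, apply_ite op]

lemma lmulMat_add {k l q : ℕ} (M : Matrix (Fin k) (Fin l) A) (W W' : Matrix (Fin l) (Fin q) Ω) :
    lmulMat M (W + W') = lmulMat M W + lmulMat M W' := by
  funext i j
  simp [lmulMat, Finset.sum_add_distrib, smul_add]

lemma lmulMat_sub {k l q : ℕ} (M : Matrix (Fin k) (Fin l) A) (W W' : Matrix (Fin l) (Fin q) Ω) :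
    lmulMat M (W - W') = lmulMat M W - lmulMat M W' := by
  funext i j
  simp [lmulMat, Finset.sum_sub_distrib, smul_sub]

lemma lmulMat_neg {k l q : ℕ} (M : Matrix (Fin k) (Fin l) A) (W : Matrix (Fin l) (Fin q) Ω) :
    lmulMat M (-W) = -lmulMat M W := by
  funext i j
  simp [lmulMat]

lemma rmulMat_add {k l q : ℕ} (W W' : Matrix (Fin k) (Fin l) Ω) (M : Matrix (Fin l) (Fin q) A) :
    rmulMat (W + W') M = rmulMat W M + rmulMat W' M := by
  funext i j
  simp [rmulMat, Finset.sum_add_distrib, smul_add]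

lemma rmulMat_sub {k l q : ℕ} (W W' : Matrix (Fin k) (Fin l) Ω) (M : Matrix (Fin l) (Fin q) A) :
    rmulMat (W - W') M = rmulMat W M - rmulMat W' M := by
  funext i j
  simp [rmulMat, Finset.sum_sub_distrib, smul_sub]

lemma rmulMat_neg {k l q : ℕ} (W : Matrix (Fin k) (Fin l) Ω) (M : Matrix (Fin l) (Fin q) A) :
    rmulMat (-W) M = -rmulMat W M := by
  funext i j
  simp [rmulMat]

lemma rmulMat_mat_add {k l q : ℕ} (W : Matrix (Fin k) (Fin l) Ω)
    (M N : Matrix (Fin l) (Fin q) A) :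
    rmulMat W (M + N) = rmulMat W M + rmulMat W N := by
  funext i j
  simp [rmulMat, Finset.sum_add_distrib, add_smul]

lemma rmulMat_mat_sub {k l q : ℕ} (W : Matrix (Fin k) (Fin l) Ω)
    (M N : Matrix (Fin l) (Fin q) A) :
    rmulMat W (M - N) = rmulMat W M - rmulMat W N := by
  funext i j
  simp [rmulMat, Finset.sum_sub_distrib, sub_smul]

lemma lmulMat_mat_add {k l q : ℕ} (M N : Matrix (Fin k) (Fin l) A)
    (W : Matrix (Fin l) (Fin q) Ω) :
    lmulMat (M + N) W = lmulMat M W + lmulMat N W := by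
  funext i j
  simp [lmulMat, Finset.sum_add_distrib, add_smul]

lemma dMat_add (d : A → Ω) (hadd : ∀ a b : A, d (a + b) = d a + d b) {k l : ℕ}
    (M N : Matrix (Fin k) (Fin l) A) : dMat d (M + N) = dMat d M + dMat d N := by
  funext i j
  simp [dMat, hadd]

lemma dMat_mul (d : A → Ω) (h0 : d 0 = 0) (hadd : ∀ a b : A, d (a + b) = d a + d b)
    (hleib : ∀ a b : A, d (a * b) = op b • d a + a • d b) {k l q : ℕ}
    (M : Matrix (Fin k) (Fin l) A) (N : Matrix (Fin l) (Fin q) A) :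
    dMat d (M * N) = rmulMat (dMat d M) N + lmulMat M (dMat d N) := by
  have hsum : ∀ {ι : Type} (s : Finset ι) (f : ι → A), d (∑ i ∈ s, f i) = ∑ i ∈ s, d (f i) := by
    intro ι s f
    exact map_sum (AddMonoidHom.mk' d hadd) f s
  funext i j
  simp only [dMat, rmulMat, lmulMat, Matrix.mul_apply, hsum, hleib, Finset.sum_add_distrib,
    Matrix.add_apply]

lemma dMat_one (d : A → Ω) (h0 : d 0 = 0) (h1 : d 1 = 0) {k : ℕ} :
    dMat d (1 : Matrix (Fin k) (Fin k) A) = 0 := by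
  funext i j
  by_cases h : i = j <;> simp [dMat, Matrix.one_apply, h, h0, h1]

end API

/-- Under the hypotheses of the binary Darboux transformation theorem
(`α = β = 0`), if in addition `Q·V = V·φ₀`, then `φ := φ₀ + U X⁻¹ V` satisfies the
Riemann equation `d̄φ = (dφ)·φ`, and moreover `(X P X⁻¹)·V = V·φ`. -/
theorem stmt_18 {A Ω : Type*} [Ring A] [AddCommGroup Ω] [Module A Ω] [Module Aᵐᵒᵖ Ω]
    [SMulCommClass A Aᵐᵒᵖ Ω]
    (d dbar : A → Ω)
    (hd_add : ∀ a b : A, d (a + b) = d a + d b)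
    (hdbar_add : ∀ a b : A, dbar (a + b) = dbar a + dbar b)
    (hd_leib : ∀ a b : A, d (a * b) = op b • d a + a • d b)
    (hdbar_leib : ∀ a b : A, dbar (a * b) = op b • dbar a + a • dbar b)
    {m n : ℕ}
    (φ₀ : Matrix (Fin m) (Fin m) A)
    (hφ₀ : dMat dbar φ₀ = rmulMat (dMat d φ₀) φ₀)
    (P Q : Matrix (Fin n) (Fin n) A)
    (hP : dMat dbar P = rmulMat (dMat d P) P)
    (hQ : dMat dbar Q = lmulMat Q (dMat d Q))
    (U : Matrix (Fin m) (Fin n) A) (V : Matrix (Fin n) (Fin m) A)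
    (hU : dMat dbar U = rmulMat (dMat d U) P + rmulMat (dMat d φ₀) U)
    (hV : dMat dbar V = lmulMat Q (dMat d V) - lmulMat V (dMat d φ₀))
    (X Xinv : Matrix (Fin n) (Fin n) A)
    (hXl : X * Xinv = 1) (hXr : Xinv * X = 1)
    (hSyl : X * P - Q * X = V * U)
    (hdX : dMat dbar X - rmulMat (dMat d X) P + rmulMat (dMat d Q) X
      + rmulMat (dMat d V) U = 0)
    (hQV : Q * V = V * φ₀)
    (φ : Matrix (Fin m) (Fin m) A)
    (hφ : φ = φ₀ + U * Xinv * V) :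
    dMat dbar φ = rmulMat (dMat d φ) φ ∧ X * P * Xinv * V = V * φ := by
  subst hφ
  have hd0 : d 0 = 0 := by
    have h := hd_add 0 0; rw [add_zero] at h; exact left_eq_add.mp h
  have hdb0 : dbar 0 = 0 := by
    have h := hdbar_add 0 0; rw [add_zero] at h; exact left_eq_add.mp h
  have hd1 : d 1 = 0 := by
    have h := hd_leib 1 1
    rw [mul_one, op_one, one_smul, one_smul] at h
    exact left_eq_add.mp h
  have hdb1 : dbar 1 = 0 := by
    have h := hdbar_leib 1 1
    rw [mul_one, op_one, one_smul, one_smul] at h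
    exact left_eq_add.mp h
  have dm : ∀ {k l q : ℕ} (M : Matrix (Fin k) (Fin l) A) (N : Matrix (Fin l) (Fin q) A),
      dMat d (M * N) = rmulMat (dMat d M) N + lmulMat M (dMat d N) :=
    fun M N => dMat_mul d hd0 hd_add hd_leib M N
  have dbm : ∀ {k l q : ℕ} (M : Matrix (Fin k) (Fin l) A) (N : Matrix (Fin l) (Fin q) A),
      dMat dbar (M * N) = rmulMat (dMat dbar M) N + lmulMat M (dMat dbar N) :=
    fun M N => dMat_mul dbar hdb0 hdbar_add hdbar_leib M N
  constructor
  · -- Riemann equation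
    have hDbX : dMat dbar X
        = rmulMat (dMat d X) P - rmulMat (dMat d Q) X - rmulMat (dMat d V) U := by
      calc dMat dbar X
          = (dMat dbar X - rmulMat (dMat d X) P + rmulMat (dMat d Q) X
              + rmulMat (dMat d V) U)
            + (rmulMat (dMat d X) P - rmulMat (dMat d Q) X - rmulMat (dMat d V) U) := by abel
        _ = _ := by rw [hdX, zero_add]
    have hDbXinv : dMat dbar Xinv = - lmulMat Xinv (rmulMat (dMat dbar X) Xinv) := by
      have h := congrArg (dMat dbar) hXl
      rw [dbm, dMat_one dbar hdb0 hdb1] at h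
      rw [add_comm] at h
      have h2 : lmulMat X (dMat dbar Xinv) = - rmulMat (dMat dbar X) Xinv :=
        eq_neg_of_add_eq_zero_left h
      calc dMat dbar Xinv = lmulMat (Xinv * X) (dMat dbar Xinv) := by rw [hXr, lmulMat_one]
        _ = lmulMat Xinv (lmulMat X (dMat dbar Xinv)) := (lmul_lmul _ _ _).symm
        _ = _ := by rw [h2, lmulMat_neg]
    have hDXinv : dMat d Xinv = - rmulMat (lmulMat Xinv (dMat d X)) Xinv := by
      have h := congrArg (dMat d) hXl
      rw [dm, dMat_one d hd0 hd1] at h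
      rw [add_comm] at h
      have h2 : lmulMat X (dMat d Xinv) = - rmulMat (dMat d X) Xinv :=
        eq_neg_of_add_eq_zero_left h
      calc dMat d Xinv = lmulMat (Xinv * X) (dMat d Xinv) := by rw [hXr, lmulMat_one]
        _ = lmulMat Xinv (lmulMat X (dMat d Xinv)) := (lmul_lmul _ _ _).symm
        _ = _ := by rw [h2, lmulMat_neg, lmul_rmul]
    have hDbXinv' : dMat dbar Xinv
        = lmulMat Xinv (dMat d Q) + rmulMat (lmulMat Xinv (dMat d V)) (U * Xinv)
          - rmulMat (lmulMat Xinv (dMat d X)) (P * Xinv) := by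
      rw [hDbXinv, hDbX]
      simp only [rmulMat_sub, lmulMat_sub, lmul_rmul, rmul_rmul, hXl, rmulMat_one]
      abel
    have hQVd : rmulMat (dMat d Q) V + lmulMat Q (dMat d V)
        = rmulMat (dMat d V) φ₀ + lmulMat V (dMat d φ₀) := by
      have h := congrArg (dMat d) hQV
      rw [dm, dm] at h
      exact h
    have hFinal : rmulMat (lmulMat (U * Xinv) (dMat d Q)) V
          + lmulMat (U * Xinv * Q) (dMat d V)
        = rmulMat (lmulMat (U * Xinv) (dMat d V)) φ₀
          + lmulMat (U * Xinv * V) (dMat d φ₀) := by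
      have h := congrArg (lmulMat (U * Xinv)) hQVd
      simpa only [lmulMat_add, lmul_rmul, lmul_lmul] using h
    have hKey : Xinv * V * (U * Xinv * V) = P * Xinv * V - Xinv * V * φ₀ := by
      calc Xinv * V * (U * Xinv * V)
          = Xinv * ((V * U) * (Xinv * V)) := by simp only [Matrix.mul_assoc]
        _ = Xinv * ((X * P - Q * X) * (Xinv * V)) := by rw [hSyl]
        _ = Xinv * (X * (P * (Xinv * V))) - Xinv * (Q * (X * (Xinv * V))) := by
            rw [Matrix.sub_mul, Matrix.mul_sub]; simp only [Matrix.mul_assoc]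
        _ = P * Xinv * V - Xinv * V * φ₀ := by
            rw [← Matrix.mul_assoc Xinv X, hXr, ← Matrix.mul_assoc X Xinv, hXl]
            simp only [Matrix.one_mul]
            rw [hQV]
            simp only [Matrix.mul_assoc]
    simp only [dMat_add dbar hdbar_add, dMat_add d hd_add, dbm, dm, hφ₀, hU, hV,
      hDbXinv', hDXinv,
      rmulMat_add, rmulMat_sub, rmulMat_neg, rmulMat_mat_add, rmulMat_mat_sub,
      lmulMat_add, lmulMat_sub, lmulMat_neg, lmulMat_mat_add,
      lmul_rmul, lmul_lmul, rmul_rmul, rmulMat_one, hKey]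
    rw [← sub_eq_zero]
    rw [← sub_eq_zero] at hFinal
    abel_nf at hFinal ⊢
    exact hFinal
  · -- (X P X⁻¹) V = V φ
    have h1 : X * P = V * U + Q * X := sub_eq_iff_eq_add.mp hSyl
    have h2 : X * P * Xinv = V * U * Xinv + Q := by
      rw [h1, Matrix.add_mul, Matrix.mul_assoc Q X Xinv, hXl, Matrix.mul_one]
    rw [h2, Matrix.add_mul, hQV, Matrix.mul_assoc V U Xinv, Matrix.mul_assoc V (U * Xinv) V, Matrix.mul_add]
    exact add_comm _ _
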